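/- Let X = {2^n : n ∈ ℕ, n ≥ 1} and Y = X ∪ {2^n + 1 : n ∈ ℕ, n ≥ 1}, both regarded as metric subspaces of ℝ. Then (1) the correspondence R = {(2^n, 2^n) : n ≥ 1} ∪ {(2^n, 2^n + 1) : n ≥ 1} between X and Y satisfies dis R ≤ 1, so 2·d_GH(X,Y) ≤ 1 < ∞; and (2) every bijection f : X → Y has dis f = ∞. In particular, X and Y have the same cardinality and finite Gromov–Hausdorff distance, yet no bijection between them has finite distortion. -/

import Mathlib

open ENNReal

/-- A correspondence between `A` and `B`: a relation whose projections are surjective. -/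
def IsCorr {A B : Type*} (R : Set (A × B)) : Prop :=
  (∀ a, ∃ b, (a, b) ∈ R) ∧ ∀ b, ∃ a, (a, b) ∈ R

/-- Distortion of a relation between metric spaces, a value in `[0,∞]`. -/
noncomputable def disMS {A B : Type*} [MetricSpace A] [MetricSpace B]
    (σ : Set (A × B)) : ℝ≥0∞ :=
  ⨆ p ∈ σ, ⨆ q ∈ σ, ENNReal.ofReal |dist p.1 q.1 - dist p.2 q.2|

/-- `X = {2^n : n ≥ 1} ⊆ ℝ`. -/
def Xset : Set ℝ := {x | ∃ n : ℕ, 1 ≤ n ∧ x = 2 ^ n}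

/-- `Y = X ∪ {2^n + 1 : n ≥ 1} ⊆ ℝ`. -/
def Yset : Set ℝ := Xset ∪ {x | ∃ n : ℕ, 1 ≤ n ∧ x = 2 ^ n + 1}

lemma pow_inj : Function.Injective (fun m : ℕ => (2:ℝ)^(m+1)) := by
  have : StrictMono (fun m : ℕ => (2:ℝ)^(m+1)) :=
    fun a b h => by exact pow_lt_pow_right₀ one_lt_two (by omega)
  exact this.injective

lemma Xrange : Xset = Set.range (fun m : ℕ => (2:ℝ)^(m+1)) := by
  ext x; constructor
  · rintro ⟨n, hn, rfl⟩
    exact ⟨n-1, by simp only; rw [Nat.sub_add_cancel hn]⟩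
  · rintro ⟨m, rfl⟩; exact ⟨m+1, by omega, rfl⟩

lemma mkX : Cardinal.mk Xset = Cardinal.aleph0 := by
  rw [Xrange, Cardinal.mk_range_eq _ pow_inj, Cardinal.mk_nat]

lemma mkY : Cardinal.mk Yset = Cardinal.aleph0 := by
  apply le_antisymm
  · have hc : Yset.Countable := by
      apply Set.Countable.union
      · rw [Xrange]; exact Set.countable_range _
      · have h2 : {x : ℝ | ∃ n : ℕ, 1 ≤ n ∧ x = 2 ^ n + 1} ⊆
            Set.range (fun m : ℕ => (2:ℝ)^(m+1) + 1) := by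
          rintro x ⟨n, hn, rfl⟩
          exact ⟨n-1, by simp only; rw [Nat.sub_add_cancel hn]⟩
        exact (Set.countable_range _).mono h2
    exact Set.Countable.le_aleph0 hc
  · have hX : Xset.Infinite := by
      rw [Xrange]; exact Set.infinite_range_of_injective pow_inj
    have : Yset.Infinite := hX.mono Set.subset_union_left
    have := this.to_subtype
    exact Cardinal.aleph0_le_mk _

lemma corrR : IsCorr {p : Xset × Yset | (p.2 : ℝ) = (p.1 : ℝ) ∨ (p.2 : ℝ) = (p.1 : ℝ) + 1} := by
  constructor
  · rintro ⟨x, hx⟩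
    exact ⟨⟨x, Or.inl hx⟩, Or.inl rfl⟩
  · rintro ⟨y, hy | ⟨n, hn, rfl⟩⟩
    · exact ⟨⟨y, hy⟩, Or.inl rfl⟩
    · exact ⟨⟨2^n, ⟨n, hn, rfl⟩⟩, Or.inr rfl⟩

lemma disR : disMS {p : Xset × Yset | (p.2 : ℝ) = (p.1 : ℝ) ∨ (p.2 : ℝ) = (p.1 : ℝ) + 1} ≤ 1 := by
  apply iSup₂_le; intro p hp
  apply iSup₂_le; intro q hq
  rw [ENNReal.ofReal_le_one]
  have key : ∀ x y : ℝ, |x - y| ≤ 1 → abs (|x| - |y|) ≤ 1 :=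
    fun x y h => (abs_abs_sub_abs_le_abs_sub x y).trans h
  simp only [Subtype.dist_eq, Real.dist_eq]
  rcases hp with h1 | h1 <;> rcases hq with h2 | h2 <;> rw [h1, h2] <;>
    [skip; skip; skip; skip] <;> (apply key; ring_nf; norm_num)

lemma key1 {j k : ℕ} (hjk : j < k) {B : ℝ} (h : |(2:ℝ)^j - 2^k| ≤ B) :
    (2:ℝ)^k ≤ 2*B := by
  have h1 : (2:ℝ)^j ≤ 2^(k-1) := pow_le_pow_right₀ one_le_two (by omega)
  have h2 : (2:ℝ)^k = 2 * 2^(k-1) := by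
    rw [← pow_succ']; congr 1; omega
  have h3 := abs_le.mp h
  linarith [h3.1, h3.2]

lemma key2 {j k : ℕ} (hjk : j ≠ k) {B : ℝ} (h : |(2:ℝ)^j - 2^k| ≤ B) :
    (2:ℝ)^j ≤ 2*B := by
  rcases lt_or_gt_of_ne hjk with hlt | hlt
  · have := key1 hlt h
    have h2 : (2:ℝ)^j ≤ 2^k := pow_le_pow_right₀ one_le_two hlt.le
    linarith
  · exact key1 hlt (by rwa [abs_sub_comm])

lemma bij_dis (f : Xset ≃ Yset) :
    (⨆ a : Xset, ⨆ a' : Xset, ENNReal.ofReal |dist (f a) (f a') - dist a a'|) = ⊤ := by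
  by_contra h
  set S := (⨆ a : Xset, ⨆ a' : Xset, ENNReal.ofReal |dist (f a) (f a') - dist a a'|) with hS
  set M := S.toReal with hMdef
  have hM : ∀ a a' : Xset, |dist (f a) (f a') - dist a a'| ≤ M := by
    intro a a'
    have hle : ENNReal.ofReal |dist (f a) (f a') - dist a a'| ≤ S :=
      le_iSup₂ (f := fun a a' : Xset => ENNReal.ofReal |dist (f a) (f a') - dist a a'|) a a'
    exact (ENNReal.ofReal_le_iff_le_toReal h).mp hle
  -- the points 2^(n+1) and 2^(n+1)+1 of Y
  have hyn : ∀ n : ℕ, (2:ℝ)^(n+1) ∈ Yset := fun n => Or.inl ⟨n+1, by omega, rfl⟩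
  have hyn' : ∀ n : ℕ, (2:ℝ)^(n+1) + 1 ∈ Yset := fun n => Or.inr ⟨n+1, by omega, rfl⟩
  set g : ℕ → Xset := fun n => f.symm ⟨(2:ℝ)^(n+1), hyn n⟩ with hg
  set g' : ℕ → Xset := fun n => f.symm ⟨(2:ℝ)^(n+1) + 1, hyn' n⟩ with hg'
  have hginj : Function.Injective g := by
    intro a b hab
    have := f.symm.injective hab
    have := Subtype.ext_iff.mp this
    simpa using pow_inj (by simpa using this)
  have hdistgg : ∀ n, dist (g n) (g' n) ≤ M + 1 := by
    intro n
    have h1 := hM (g n) (g' n)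
    have h2 : dist (f (g n)) (f (g' n)) = 1 := by
      simp only [hg, hg', Equiv.apply_symm_apply, Subtype.dist_eq, Real.dist_eq]
      ring_nf; norm_num
    rw [h2] at h1
    have := (abs_le.mp h1).1
    linarith
  have hne : ∀ n, g n ≠ g' n := by
    intro n hgg
    have : f (g n) = f (g' n) := congrArg f hgg
    simp only [hg, hg', Equiv.apply_symm_apply, Subtype.ext_iff] at this
    linarith [this]
  have main : ∀ n : ℕ, ∃ j : ℕ, ((g n : ℝ)) = 2^j ∧ (j:ℝ) < 2*(M+1) := by
    intro n
    obtain ⟨j, hj1, hj2⟩ := (g n).2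
    obtain ⟨k, hk1, hk2⟩ := (g' n).2
    refine ⟨j, hj2, ?_⟩
    have hjk : j ≠ k := by
      intro hjk
      exact hne n (Subtype.ext (by rw [hj2, hk2, hjk]))
    have hd : |(2:ℝ)^j - 2^k| ≤ M + 1 := by
      have := hdistgg n
      rwa [Subtype.dist_eq, Real.dist_eq, hj2, hk2] at this
    have h2j := key2 hjk hd
    have hlt : (j:ℝ) < 2^j := by
      have := Nat.lt_two_pow_self (n := j)
      calc (j:ℝ) < ((2^j : ℕ) : ℝ) := by exact_mod_cast this
        _ = 2^j := by push_cast; ring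
    linarith
  choose E hE1 hE2 using main
  have hEinj : Function.Injective E := by
    intro a b hab
    apply hginj
    apply Subtype.ext
    rw [hE1 a, hE1 b, hab]
  set N : ℕ := ⌈2*(M+1)⌉₊ with hN
  have hlt : ∀ n, E n ∈ Set.Iio N := fun n => Nat.lt_ceil.mpr (hE2 n)
  exact Set.infinite_range_of_injective hEinj
    ((Set.finite_Iio N).subset (by rintro _ ⟨n, rfl⟩; exact hlt n))

/-- `X` and `Y` have the same cardinality, the correspondence
`R = {(2^n, 2^n)} ∪ {(2^n, 2^n + 1)}` has distortion at most `1`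
(so `2 d_GH(X,Y) ≤ 1 < ∞`), yet every bijection `X → Y` has infinite distortion. -/
theorem stmt_2 :
    Cardinal.mk Xset = Cardinal.mk Yset ∧
    (IsCorr {p : Xset × Yset | (p.2 : ℝ) = (p.1 : ℝ) ∨ (p.2 : ℝ) = (p.1 : ℝ) + 1} ∧
      disMS {p : Xset × Yset | (p.2 : ℝ) = (p.1 : ℝ) ∨ (p.2 : ℝ) = (p.1 : ℝ) + 1} ≤ 1 ∧
      (⨅ R ∈ {R : Set (Xset × Yset) | IsCorr R}, disMS R) ≤ 1) ∧
    ∀ f : Xset ≃ Yset,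
      (⨆ a : Xset, ⨆ a' : Xset, ENNReal.ofReal |dist (f a) (f a') - dist a a'|) = ⊤ := by
  refine ⟨mkX.trans mkY.symm, ⟨corrR, disR, ?_⟩, bij_dis⟩
  exact le_trans (iInf₂_le _ corrR) disR
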